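/- Let B ≥ 1, let r be an odd integer with 1 ≤ r ≤ 2B−1, and let G_r be the (B+1)×(B+1) matrix with entries G_r[i,j] = a_{|r+2(i+j)|} + a_{|r+2(i−j)|} for 0 ≤ i, j ≤ B, where (a_m) is a family of field elements indexed by odd positive integers. If the entry a_{r+2B} is replaced by a variable α, then α occurs (added to a constant) exactly on the antidiagonal i + j = B of G_r, and det(G_r) is a univariate polynomial of degree B+1 in α. -/
import Mathlib


open Polynomial

/-- In the Hankel+Toeplitz matrix `G_r = [a_{|r+2(i+j)|} + a_{|r+2(i-j)|}]`, if the
value `a_{r+2B}` is replaced by a variable `α`, then `α` occurs (added to a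
constant) exactly on the antidiagonal `i + j = B`, and `det G_r` is a univariate
polynomial of degree `B + 1` in `α`. -/
theorem stmt7 (K : Type*) [Field K] (h2 : (2 : K) ≠ 0) (B : ℕ) (hB : 1 ≤ B)
    (r : ℕ) (hodd : Odd r) (hr1 : 1 ≤ r) (hr2 : r ≤ 2 * B - 1)
    (a : ℕ → K)
    (e : ℕ → K[X]) (he : ∀ m, e m = if m = r + 2 * B then X else C (a m))
    (G : Matrix (Fin (B + 1)) (Fin (B + 1)) K[X])
    (hG : ∀ i j : Fin (B + 1),
      G i j = e ((r + 2 * ((i : ℤ) + (j : ℤ))).natAbs)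
            + e ((r + 2 * ((i : ℤ) - (j : ℤ))).natAbs)) :
    (∀ i j : Fin (B + 1),
        (((i : ℕ) + (j : ℕ) = B) → ∃ cst : K, G i j = X + C cst ∨ G i j = 2 * X) ∧
        (((i : ℕ) + (j : ℕ) ≠ B) → ∃ cst : K, G i j = C cst)) ∧
    G.det.natDegree = B + 1 := by
  have h2X : (2 * X : K[X]) ≠ 0 := by
    intro h
    have := natDegree_C_mul_X (2 : K) h2
    rw [show (C (2:K)) * X = 2 * X by rw [map_ofNat], h] at this
    simp at this
  -- entry description
  have key : ∀ i j : Fin (B+1),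
      ((i:ℕ)+(j:ℕ) = B → (((i:ℕ) = B → G i j = 2 * X) ∧ ((i:ℕ) ≠ B → ∃ c : K, G i j = X + C c))) ∧
      ((i:ℕ)+(j:ℕ) ≠ B → ∃ c : K, G i j = C c) := by
    intro i j
    have hi : (i:ℕ) ≤ B := Nat.lt_succ_iff.mp i.isLt
    have hj : (j:ℕ) ≤ B := Nat.lt_succ_iff.mp j.isLt
    have hic : (i:ℤ) = ((i:ℕ):ℤ) := rfl
    have hjc : (j:ℤ) = ((j:ℕ):ℤ) := rfl
    rw [hG i j, hic, hjc, he, he]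
    constructor
    · intro hsum
      constructor
      · intro hiB
        have hjB : (j:ℕ) = 0 := by omega
        have e1 : ((r:ℤ) + 2 * (((i:ℕ):ℤ) + ((j:ℕ):ℤ))).natAbs = r + 2 * B := by omega
        have e2 : ((r:ℤ) + 2 * (((i:ℕ):ℤ) - ((j:ℕ):ℤ))).natAbs = r + 2 * B := by omega
        rw [e1, e2]
        simp [two_mul]
      · intro hiB
        have e1 : ((r:ℤ) + 2 * (((i:ℕ):ℤ) + ((j:ℕ):ℤ))).natAbs = r + 2 * B := by omega
        have e2 : ((r:ℤ) + 2 * (((i:ℕ):ℤ) - ((j:ℕ):ℤ))).natAbs ≠ r + 2 * B := by omega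
        rw [e1, if_pos rfl, if_neg e2]
        exact ⟨_, rfl⟩
    · intro hsum
      have e1 : ((r:ℤ) + 2 * (((i:ℕ):ℤ) + ((j:ℕ):ℤ))).natAbs ≠ r + 2 * B := by omega
      have e2 : ((r:ℤ) + 2 * (((i:ℕ):ℤ) - ((j:ℕ):ℤ))).natAbs ≠ r + 2 * B := by omega
      rw [if_neg e1, if_neg e2, ← C_add]
      exact ⟨_, rfl⟩
  -- degree facts about entries
  have hdeg1 : ∀ i j : Fin (B+1), (i:ℕ)+(j:ℕ) = B →
      (G i j).natDegree = 1 ∧ G i j ≠ 0 := by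
    intro i j h
    rcases eq_or_ne (i:ℕ) B with hiB | hiB
    · rw [(key i j).1 h |>.1 hiB]
      refine ⟨?_, h2X⟩
      have := natDegree_C_mul_X (2 : K) h2
      rwa [show (C (2:K)) * X = 2 * X by rw [map_ofNat]] at this
    · obtain ⟨c, hc⟩ := (key i j).1 h |>.2 hiB
      rw [hc]
      exact ⟨natDegree_X_add_C c, X_add_C_ne_zero c⟩
  have hdeg0 : ∀ i j : Fin (B+1), (i:ℕ)+(j:ℕ) ≠ B → (G i j).natDegree = 0 := by
    intro i j h
    obtain ⟨c, hc⟩ := (key i j).2 h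
    rw [hc]; exact natDegree_C c
  refine ⟨fun i j => ⟨fun h => ?_, fun h => (key i j).2 h⟩, ?_⟩
  · rcases eq_or_ne (i:ℕ) B with hiB | hiB
    · exact ⟨0, Or.inr (((key i j).1 h).1 hiB)⟩
    · obtain ⟨c, hc⟩ := ((key i j).1 h).2 hiB
      exact ⟨c, Or.inl hc⟩
  -- determinant degree
  · have hrev : ∀ i : Fin (B+1), ((Fin.revPerm i : Fin (B+1)) : ℕ) + (i:ℕ) = B := by
      intro i
      have hi : (i:ℕ) ≤ B := Nat.lt_succ_iff.mp i.isLt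
      simp [Fin.revPerm, Fin.val_rev]
      omega
    have hmain : (∏ i : Fin (B+1), G (Fin.revPerm i) i).natDegree = B + 1 := by
      rw [natDegree_prod _ _ (fun i _ => (hdeg1 _ _ (hrev i)).2)]
      simp only [fun i : Fin (B+1) => (hdeg1 _ _ (hrev i)).1]
      simp
    have hsmul : ∀ (σ : Equiv.Perm (Fin (B+1))) (p : K[X]),
        ((Equiv.Perm.sign σ : ℤˣ) • p).natDegree = p.natDegree := by
      intro σ p
      rcases Int.units_eq_one_or (Equiv.Perm.sign σ) with h | h <;> rw [h]
      · simp
      · have : ((-1 : ℤˣ) • p) = -p := by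
          rw [Units.smul_def]; simp
        rw [this, natDegree_neg]
    have hother : ∀ σ : Equiv.Perm (Fin (B+1)), σ ≠ Fin.revPerm →
        (∏ i : Fin (B+1), G (σ i) i).natDegree ≤ B := by
      intro σ hσ
      have : ∃ i0 : Fin (B+1), ((σ i0 : Fin (B+1)) : ℕ) + (i0 : ℕ) ≠ B := by
        by_contra hc
        push_neg at hc
        apply hσ
        ext i
        have h1 := hc i
        have h2 := hrev i
        omega
      obtain ⟨i0, hi0⟩ := this
      refine le_trans (natDegree_prod_le _ _) ?_
      calc ∑ i : Fin (B+1), (G (σ i) i).natDegree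
          = ∑ i ∈ Finset.univ.erase i0, (G (σ i) i).natDegree := by
            rw [← Finset.add_sum_erase _ _ (Finset.mem_univ i0), hdeg0 _ _ hi0, zero_add]
        _ ≤ ∑ _i ∈ Finset.univ.erase i0, 1 := by
            refine Finset.sum_le_sum fun i _ => ?_
            rcases eq_or_ne (((σ i : Fin (B+1)) : ℕ) + (i:ℕ)) B with h | h
            · exact le_of_eq (hdeg1 _ _ h).1
            · exact le_of_eq (hdeg0 _ _ h) |>.trans (Nat.zero_le 1)
        _ ≤ B := by
            rw [Finset.sum_const, smul_eq_mul, mul_one,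
              Finset.card_erase_of_mem (Finset.mem_univ i0), Finset.card_univ, Fintype.card_fin]
            omega
    rw [Matrix.det_apply,
      ← Finset.add_sum_erase _ _ (Finset.mem_univ (Fin.revPerm : Equiv.Perm (Fin (B+1))))]
    rw [natDegree_add_eq_left_of_natDegree_lt, hsmul, hmain]
    rw [hsmul, hmain]
    refine lt_of_le_of_lt (natDegree_sum_le_of_forall_le _ _ fun σ hσ => ?_) (Nat.lt_succ_self B)
    rw [hsmul]
    exact hother σ (Finset.ne_of_mem_erase hσ)
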